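/- For every integer k ≥ 0, let T_v be the rooted tree whose root v has three children, each of which is the root of a copy of H(k); then the graph T_v² ∖ {v}, obtained from the square of T_v by deleting v, has linear MIM-width at least 2k + 1. -/

import Mathlib

open scoped Classical

noncomputable section

namespace LMW

variable {V : Type*} [Fintype V]

/-- The bipartite graph `G[Vᵢ, V̄ᵢ]` consisting of the edges of `G` crossing the cut at
position `i` of the linear layout `σ` (here `Vᵢ` is the set of the first `i` vertices
in the layout). -/
def cutGraph (G : SimpleGraph V) (σ : V ≃ Fin (Fintype.card V)) (i : ℕ) : SimpleGraph V where
  Adj u v := G.Adj u v ∧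
    (((σ u : ℕ) < i ∧ i ≤ (σ v : ℕ)) ∨ ((σ v : ℕ) < i ∧ i ≤ (σ u : ℕ)))
  symm := by
    constructor
    intro u v h
    exact ⟨h.1.symm, h.2.symm⟩
  loopless := by
    constructor
    intro u h
    exact G.loopless.irrefl u h.1

/-- `M` is an induced matching in `H`: a set of edges of `H` such that any two distinct
edges of `M` share no endpoint and no endpoint of one is adjacent in `H` to an endpoint
of the other. -/
def IsInducedMatching (H : SimpleGraph V) (M : Finset (Sym2 V)) : Prop :=
  (↑M : Set (Sym2 V)) ⊆ H.edgeSet ∧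
    ∀ e ∈ M, ∀ f ∈ M, e ≠ f → ∀ u ∈ e, ∀ v ∈ f, u ≠ v ∧ ¬ H.Adj u v

/-- `mim H` is the size of a maximum induced matching of `H`. -/
def mim (H : SimpleGraph V) : ℕ :=
  sSup {n : ℕ | ∃ M : Finset (Sym2 V), IsInducedMatching H M ∧ M.card = n}

/-- The MIM-width of `G` under the linear layout `σ`: the maximum over all cuts
`1 ≤ i < |V|` of the size of a maximum induced matching of the cut graph. -/
def mw (G : SimpleGraph V) (σ : V ≃ Fin (Fintype.card V)) : ℕ :=
  (Finset.Ico 1 (Fintype.card V)).sup fun i => mim (cutGraph G σ i)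

/-- The linear MIM-width of `G`: the minimum of `mw G σ` over all linear layouts `σ`. -/
def lmw (G : SimpleGraph V) : ℕ :=
  sInf {m : ℕ | ∃ σ : V ≃ Fin (Fintype.card V), mw G σ = m}

/-- The `m`-th power of a graph: two distinct vertices are adjacent iff their distance
in `G` is at most `m`. -/
def graphPow (G : SimpleGraph V) (m : ℕ) : SimpleGraph V where
  Adj u v := u ≠ v ∧ G.edist u v ≤ m
  symm := by
    constructor
    intro u v h
    refine ⟨h.1.symm, ?_⟩
    rw [SimpleGraph.edist_comm]
    exact h.2
  loopless := by
    constructor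
    intro u h
    exact h.1 rfl

/-- Vertex type of the tree `H k`:  `H 0` is a single vertex; `H (k+1)` consists of a root
`u = Sum.inl ()`, three children `vᵢ = Sum.inr (i, Sum.inl ())` and, below each `vᵢ`, three
copies of `H k`, the `j`-th copy having vertices `Sum.inr (i, Sum.inr (j, a))`. -/
def HV : ℕ → Type
  | 0 => Unit
  | k + 1 => Unit ⊕ (Fin 3 × (Unit ⊕ (Fin 3 × HV k)))

instance instDecEqHV : ∀ k, DecidableEq (HV k)
  | 0 => inferInstanceAs (DecidableEq Unit)
  | k + 1 =>
    letI := instDecEqHV k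
    inferInstanceAs (DecidableEq (Unit ⊕ (Fin 3 × (Unit ⊕ (Fin 3 × HV k)))))

instance instFintypeHV : ∀ k, Fintype (HV k)
  | 0 => inferInstanceAs (Fintype Unit)
  | k + 1 =>
    letI := instFintypeHV k
    inferInstanceAs (Fintype (Unit ⊕ (Fin 3 × (Unit ⊕ (Fin 3 × HV k)))))

/-- The root of `H k`. -/
def Hroot : ∀ k, HV k
  | 0 => ()
  | _ + 1 => Sum.inl ()

/-- The tree `H k`: the root `u` is adjacent to the three children `vᵢ`, each child `vᵢ` is
adjacent to the roots of its three copies of `H k`, and within each copy the edges are those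
of `H k`. -/
def Hgraph : ∀ k, SimpleGraph (HV k)
  | 0 => ⊥
  | k + 1 => SimpleGraph.fromRel (fun x y : HV (k + 1) =>
      (∃ i : Fin 3, x = Sum.inl () ∧ y = Sum.inr (i, Sum.inl ())) ∨
      (∃ (i j : Fin 3), x = Sum.inr (i, Sum.inl ()) ∧ y = Sum.inr (i, Sum.inr (j, Hroot k))) ∨
      (∃ (i j : Fin 3) (a b : HV k), x = Sum.inr (i, Sum.inr (j, a)) ∧
        y = Sum.inr (i, Sum.inr (j, b)) ∧ (Hgraph k).Adj a b))

/-- The rooted tree `T_v` whose root `v = Sum.inl ()` has three children, each of which is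
the root of a copy of `H k`; the vertices of the `i`-th copy are `Sum.inr (i, a)`. -/
def TvGraph (k : ℕ) : SimpleGraph (Unit ⊕ (Fin 3 × HV k)) :=
  SimpleGraph.fromRel (fun x y =>
    (∃ i : Fin 3, x = Sum.inl () ∧ y = Sum.inr (i, Hroot k)) ∨
    (∃ (i : Fin 3) (a b : HV k), x = Sum.inr (i, a) ∧ y = Sum.inr (i, b) ∧
      (Hgraph k).Adj a b))

/-! ### Auxiliary development -/

section TwoStep

variable {W : Type*}

lemma edist_le_two_iff (G : SimpleGraph W) (u v : W) :
    G.edist u v ≤ 2 ↔ u = v ∨ G.Adj u v ∨ ∃ w, G.Adj u w ∧ G.Adj w v := by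
  constructor
  · intro h
    have hne : G.edist u v ≠ ⊤ := fun ht => by simp [ht] at h
    obtain ⟨p, hp⟩ :=
      (SimpleGraph.reachable_of_edist_ne_top hne).exists_walk_length_eq_edist
    have hp2 : p.length ≤ 2 := by
      have h2 : (p.length : ℕ∞) ≤ 2 := hp ▸ h
      exact_mod_cast h2
    cases p with
    | nil => exact Or.inl rfl
    | cons h1 q =>
      cases q with
      | nil => exact Or.inr (Or.inl h1)
      | cons h2 q' =>
        cases q' with
        | nil => exact Or.inr (Or.inr ⟨_, h1, h2⟩)
        | cons h3 q'' =>
          simp only [SimpleGraph.Walk.length_cons] at hp2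
          omega
  · rintro (rfl | h | ⟨w, h1, h2⟩)
    · simp [SimpleGraph.edist_self]
    · refine le_trans (SimpleGraph.edist_le (.cons h .nil)) ?_
      simp
    · refine le_trans (SimpleGraph.edist_le (.cons h1 (.cons h2 .nil))) ?_
      simp

lemma adj_edist_le_two {G : SimpleGraph W} {u v : W} (h : G.Adj u v) :
    G.edist u v ≤ 2 :=
  (edist_le_two_iff G u v).mpr (Or.inr (Or.inl h))

lemma exists_cross_edge (H : SimpleGraph W) (f : W → ℕ) (t : ℕ) :
    ∀ {a b : W}, H.Walk a b → f a < t → t ≤ f b →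
      ∃ u v, H.Adj u v ∧ f u < t ∧ t ≤ f v := by
  intro a b w
  induction w with
  | nil => intro h1 h2; omega
  | @cons u c d h p ih =>
    intro h1 h2
    by_cases hm : f c < t
    · exact ih hm h2
    · exact ⟨u, c, h, h1, le_of_not_gt hm⟩

end TwoStep

section StarQ

variable {B : Type*}

/-- The rooted tree whose root is `Sum.inl ()` and which has three children, each the
root of a copy of the rooted tree `(β, r)`. -/
def starQ (β : SimpleGraph B) (r : B) : SimpleGraph (Unit ⊕ (Fin 3 × B)) :=
  SimpleGraph.fromRel (fun x y =>
    (∃ i : Fin 3, x = Sum.inl () ∧ y = Sum.inr (i, r)) ∨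
    (∃ (i : Fin 3) (a b : B), x = Sum.inr (i, a) ∧ y = Sum.inr (i, b) ∧ β.Adj a b))

lemma TvGraph_eq (k : ℕ) : TvGraph k = starQ (Hgraph k) (Hroot k) := rfl

variable {β : SimpleGraph B} {r : B}

lemma starQ_adj_inl_inr (j : Fin 3) (a : B) :
    (starQ β r).Adj (Sum.inl ()) (Sum.inr (j, a)) ↔ a = r := by
  constructor
  · rintro ⟨hne, (⟨i, -, h⟩ | ⟨i, c, d, h, -, -⟩) | (⟨i, h, -⟩ | ⟨i, c, d, -, h, -⟩)⟩
    · simp only [Sum.inr.injEq, Prod.mk.injEq] at h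
      exact h.2
    · exact absurd h (by simp)
    · exact absurd h (by simp)
    · exact absurd h (by simp)
  · rintro rfl
    exact ⟨by simp, Or.inl (Or.inl ⟨j, rfl, rfl⟩)⟩

lemma starQ_adj_inr_inr (j j' : Fin 3) (a a' : B) :
    (starQ β r).Adj (Sum.inr (j, a)) (Sum.inr (j', a')) ↔ j = j' ∧ β.Adj a a' := by
  constructor
  · rintro ⟨hne, (⟨i, h, -⟩ | ⟨i, c, d, h1, h2, h3⟩) | (⟨i, h, -⟩ | ⟨i, c, d, h1, h2, h3⟩)⟩
    · exact absurd h (by simp)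
    · simp only [Sum.inr.injEq, Prod.mk.injEq] at h1 h2
      obtain ⟨hj, ha⟩ := h1
      obtain ⟨hj', ha'⟩ := h2
      subst hj ha hj' ha'
      exact ⟨rfl, h3⟩
    · exact absurd h (by simp)
    · simp only [Sum.inr.injEq, Prod.mk.injEq] at h1 h2
      obtain ⟨hj, ha⟩ := h1
      obtain ⟨hj', ha'⟩ := h2
      subst hj ha hj' ha'
      exact ⟨rfl, h3.symm⟩
  · rintro ⟨rfl, h⟩
    exact ⟨by simp [h.ne], Or.inl (Or.inr ⟨j, a, a', rfl, rfl, h⟩)⟩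

lemma starQ_edist_inr_inr_same (j : Fin 3) (a a' : B) :
    (starQ β r).edist (Sum.inr (j, a)) (Sum.inr (j, a')) ≤ 2 ↔ β.edist a a' ≤ 2 := by
  constructor
  · intro h
    rcases (edist_le_two_iff _ _ _).mp h with heq | hadj | ⟨w, h1, h2⟩
    · simp only [Sum.inr.injEq, Prod.mk.injEq] at heq
      rw [heq.2]
      simp [SimpleGraph.edist_self]
    · exact adj_edist_le_two ((starQ_adj_inr_inr _ _ _ _).mp hadj).2
    · rcases w with u | ⟨j₂, c⟩
      · cases u
        have ha : a = r := (starQ_adj_inl_inr j a).mp h1.symm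
        have ha' : a' = r := (starQ_adj_inl_inr j a').mp h2
        rw [ha, ha']
        simp [SimpleGraph.edist_self]
      · obtain ⟨hj, hac⟩ := (starQ_adj_inr_inr _ _ _ _).mp h1
        obtain ⟨hj', hca'⟩ := (starQ_adj_inr_inr _ _ _ _).mp h2
        exact (edist_le_two_iff β a a').mpr (Or.inr (Or.inr ⟨c, hac, hca'⟩))
  · intro h
    rcases (edist_le_two_iff β a a').mp h with rfl | hadj | ⟨c, h1, h2⟩
    · simp [SimpleGraph.edist_self]
    · exact adj_edist_le_two ((starQ_adj_inr_inr j j a a').mpr ⟨rfl, hadj⟩)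
    · exact (edist_le_two_iff _ _ _).mpr (Or.inr (Or.inr ⟨Sum.inr (j, c),
        (starQ_adj_inr_inr j j a c).mpr ⟨rfl, h1⟩,
        (starQ_adj_inr_inr j j c a').mpr ⟨rfl, h2⟩⟩))

lemma starQ_edist_inr_inr_ne (j j' : Fin 3) (a a' : B) (hj : j ≠ j') :
    (starQ β r).edist (Sum.inr (j, a)) (Sum.inr (j', a')) ≤ 2 ↔ a = r ∧ a' = r := by
  constructor
  · intro h
    rcases (edist_le_two_iff _ _ _).mp h with heq | hadj | ⟨w, h1, h2⟩
    · simp only [Sum.inr.injEq, Prod.mk.injEq] at heq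
      exact absurd heq.1 hj
    · exact absurd ((starQ_adj_inr_inr _ _ _ _).mp hadj).1 hj
    · rcases w with u | ⟨j₂, c⟩
      · cases u
        exact ⟨(starQ_adj_inl_inr j a).mp h1.symm, (starQ_adj_inl_inr j' a').mp h2⟩
      · obtain ⟨hj1, -⟩ := (starQ_adj_inr_inr _ _ _ _).mp h1
        obtain ⟨hj2, -⟩ := (starQ_adj_inr_inr _ _ _ _).mp h2
        exact absurd (hj1.trans hj2) hj
  · rintro ⟨ha, ha'⟩
    rw [ha, ha']
    exact (edist_le_two_iff _ _ _).mpr (Or.inr (Or.inr ⟨Sum.inl (),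
      ((starQ_adj_inl_inr j r).mpr rfl).symm, (starQ_adj_inl_inr j' r).mpr rfl⟩))

lemma starQ_connected (h : β.Connected) : (starQ β r).Connected := by
  have hlift : ∀ (j : Fin 3) (a b : B),
      (starQ β r).Reachable (Sum.inr (j, a)) (Sum.inr (j, b)) := by
    intro j a b
    obtain ⟨w⟩ := h.preconnected a b
    induction w with
    | nil => exact SimpleGraph.Reachable.refl _
    | cons hadj p ih =>
      exact (SimpleGraph.Adj.reachable
        ((starQ_adj_inr_inr _ _ _ _).mpr ⟨rfl, hadj⟩)).trans ih
  have hroot : ∀ z, (starQ β r).Reachable z (Sum.inl ()) := by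
    rintro (u | ⟨j, a⟩)
    · cases u; exact SimpleGraph.Reachable.refl _
    · exact (hlift j a r).trans
        (SimpleGraph.Adj.reachable ((starQ_adj_inl_inr j r).mpr rfl).symm)
  rw [SimpleGraph.connected_iff]
  exact ⟨fun z z' => (hroot z).trans (hroot z').symm, ⟨Sum.inl ()⟩⟩

end StarQ
section Target

variable {B : Type*}

/-- Explicit description of the graph `(starQ β r)² \ {root}` on the product type. -/
def tg (β : SimpleGraph B) (r : B) : SimpleGraph (Fin 3 × B) where
  Adj x y := (x.1 = y.1 ∧ x.2 ≠ y.2 ∧ β.edist x.2 y.2 ≤ 2) ∨ (x.1 ≠ y.1 ∧ x.2 = r ∧ y.2 = r)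
  symm := by
    constructor
    rintro ⟨i, a⟩ ⟨j, b⟩ (⟨h1, h2, h3⟩ | ⟨h1, h2, h3⟩)
    · exact Or.inl ⟨h1.symm, h2.symm, SimpleGraph.edist_comm ▸ h3⟩
    · exact Or.inr ⟨h1.symm, h3, h2⟩
  loopless := by
    constructor
    rintro ⟨i, a⟩ (⟨-, h, -⟩ | ⟨h, -, -⟩) <;> exact h rfl

variable {β : SimpleGraph B} {r : B}

lemma tg_adj (x y : Fin 3 × B) :
    (tg β r).Adj x y ↔
      (x.1 = y.1 ∧ x.2 ≠ y.2 ∧ β.edist x.2 y.2 ≤ 2) ∨ (x.1 ≠ y.1 ∧ x.2 = r ∧ y.2 = r) :=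
  Iff.rfl

lemma tg_adj_iff_pow (p q : Fin 3 × B) :
    (tg β r).Adj p q ↔ ((Sum.inr p : Unit ⊕ Fin 3 × B) ≠ Sum.inr q ∧
      (starQ β r).edist (Sum.inr p) (Sum.inr q) ≤ 2) := by
  obtain ⟨j, a⟩ := p
  obtain ⟨j', a'⟩ := q
  rw [tg_adj]
  by_cases hj : j = j'
  · subst hj
    constructor
    · rintro (⟨-, h2, h3⟩ | ⟨h1, -, -⟩)
      · exact ⟨by simp [h2], (starQ_edist_inr_inr_same j a a').mpr h3⟩
      · exact absurd rfl h1
    · rintro ⟨h1, h2⟩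
      refine Or.inl ⟨rfl, ?_, (starQ_edist_inr_inr_same j a a').mp h2⟩
      intro h
      exact h1 (congrArg (fun z : B => (Sum.inr (j, z) : Unit ⊕ Fin 3 × B)) h)
  · constructor
    · rintro (⟨h1, -, -⟩ | ⟨-, h2, h3⟩)
      · exact absurd h1 hj
      · exact ⟨by simp [hj], (starQ_edist_inr_inr_ne j j' a a' hj).mpr ⟨h2, h3⟩⟩
    · rintro ⟨-, h2⟩
      obtain ⟨ha, ha'⟩ := (starQ_edist_inr_inr_ne j j' a a' hj).mp h2
      exact Or.inr ⟨hj, ha, ha'⟩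

lemma tg_starQ_adj_emb (i : Fin 3) (p q : Fin 3 × B) :
    (tg (starQ β r) (Sum.inl ())).Adj (i, Sum.inr p) (i, Sum.inr q) ↔ (tg β r).Adj p q := by
  rw [tg_adj, tg_adj_iff_pow]
  constructor
  · rintro (⟨-, h2, h3⟩ | ⟨h1, -, -⟩)
    · exact ⟨h2, h3⟩
    · exact absurd rfl h1
  · rintro ⟨h1, h2⟩
    exact Or.inl ⟨rfl, h1, h2⟩

lemma tg_starQ_not_adj_cross (i i' : Fin 3) (hi : i' ≠ i) (x : Unit ⊕ Fin 3 × B)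
    (p : Fin 3 × B) : ¬ (tg (starQ β r) (Sum.inl ())).Adj (i', x) (i, Sum.inr p) := by
  intro h
  rw [tg_adj] at h
  rcases h with ⟨h1, -, -⟩ | ⟨-, -, h3⟩
  · exact hi h1
  · exact absurd h3 (by simp)

end Target
section Cross

variable {W W' : Type*}

/-- The graph of edges of `G` crossing the cut at position `t` of the vertex ranking `pos`. -/
def crossG (G : SimpleGraph W) (pos : W → ℕ) (t : ℕ) : SimpleGraph W where
  Adj u v := G.Adj u v ∧ ((pos u < t ∧ t ≤ pos v) ∨ (pos v < t ∧ t ≤ pos u))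
  symm := ⟨fun u v h => ⟨h.1.symm, h.2.symm⟩⟩
  loopless := ⟨fun u h => G.loopless.irrefl u h.1⟩

lemma crossG_adj {G : SimpleGraph W} {pos : W → ℕ} {t : ℕ} {u v : W} :
    (crossG G pos t).Adj u v ↔
      G.Adj u v ∧ ((pos u < t ∧ t ≤ pos v) ∨ (pos v < t ∧ t ≤ pos u)) := Iff.rfl

lemma cutGraph_eq_crossG [Fintype W] (G : SimpleGraph W)
    (σ : W ≃ Fin (Fintype.card W)) (i : ℕ) :
    cutGraph G σ i = crossG G (fun v => (σ v : ℕ)) i := rfl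

lemma isInducedMatching_map [Fintype W] [Fintype W'] {H : SimpleGraph W}
    {H' : SimpleGraph W'} {f : W → W'} (hf : Function.Injective f)
    (hadj : ∀ a b, H.Adj a b ↔ H'.Adj (f a) (f b))
    {M : Finset (Sym2 W)} (hM : IsInducedMatching H M) :
    ∃ M' : Finset (Sym2 W'), IsInducedMatching H' M' ∧ M'.card = M.card ∧
      ∀ g ∈ M', ∀ z ∈ g, ∃ a, z = f a := by
  refine ⟨M.image (Sym2.map f), ⟨?_, ?_⟩,
    Finset.card_image_of_injective M (Sym2.map.injective hf), ?_⟩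
  · intro e' he'
    obtain ⟨e, he, rfl⟩ := Finset.mem_image.mp (Finset.mem_coe.mp he')
    have hedge : e ∈ H.edgeSet := hM.1 (Finset.mem_coe.mpr he)
    induction e using Sym2.ind with
    | _ a b =>
      rw [Sym2.map_pair_eq]
      exact (SimpleGraph.mem_edgeSet _).mpr
        ((hadj a b).mp ((SimpleGraph.mem_edgeSet _).mp hedge))
  · intro e' he' f' hf' hef u hu v hv
    obtain ⟨e, he, rfl⟩ := Finset.mem_image.mp he'
    obtain ⟨g, hg, rfl⟩ := Finset.mem_image.mp hf'
    obtain ⟨a, ha, rfl⟩ := Sym2.mem_map.mp hu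
    obtain ⟨b, hb, rfl⟩ := Sym2.mem_map.mp hv
    have heg : e ≠ g := fun h => hef (by rw [h])
    obtain ⟨hab, hnadj⟩ := hM.2 e he g hg heg a ha b hb
    exact ⟨fun h => hab (hf h), fun h => hnadj ((hadj a b).mpr h)⟩
  · intro g hg z hz
    obtain ⟨g0, hg0, rfl⟩ := Finset.mem_image.mp hg
    obtain ⟨a, -, ha⟩ := Sym2.mem_map.mp hz
    exact ⟨a, ha.symm⟩

lemma le_mim [Fintype W] {H : SimpleGraph W} {M : Finset (Sym2 W)}
    (hM : IsInducedMatching H M) : M.card ≤ mim H := by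
  apply le_csSup
  · refine ⟨Fintype.card (Sym2 W), ?_⟩
    rintro n ⟨M', -, rfl⟩
    exact le_trans (Finset.card_le_univ M') (le_of_eq (Finset.card_univ))
  · exact ⟨M, hM, rfl⟩

lemma le_lmw [Fintype W] {G : SimpleGraph W} {m : ℕ}
    (h : ∀ σ : W ≃ Fin (Fintype.card W), m ≤ mw G σ) : m ≤ lmw G := by
  apply le_csInf
  · exact ⟨mw G (Fintype.equivFin W), Fintype.equivFin W, rfl⟩
  · rintro n ⟨σ, rfl⟩
    exact h σ

end Cross

section Main

/-- The key inductive invariant: for every injective ranking of the vertices of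
`tg β r` there is a cut whose crossing graph contains an induced matching of size `m`. -/
def GoodFam {B : Type*} [Fintype B] (β : SimpleGraph B) (r : B) (m : ℕ) : Prop :=
  ∀ pos : Fin 3 × B → ℕ, Function.Injective pos →
    ∃ t : ℕ, ∃ M : Finset (Sym2 (Fin 3 × B)),
      IsInducedMatching (crossG (tg β r) pos t) M ∧ m ≤ M.card

lemma goodFam_base : GoodFam (⊥ : SimpleGraph Unit) () 1 := by
  intro pos hpos
  obtain ⟨x0, -, hx0⟩ := Finset.exists_min_image Finset.univ pos ⟨(0, ()), Finset.mem_univ _⟩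
  have hfin : x0.1 + 1 ≠ x0.1 := by
    have h3 : ∀ a : Fin 3, a + 1 ≠ a := by decide
    exact h3 x0.1
  have hne : (x0.1 + 1, ()) ≠ x0 := by
    intro h
    exact hfin (congrArg Prod.fst h)
  have hpos1 : pos x0 + 1 ≤ pos (x0.1 + 1, ()) := by
    have h1 : pos x0 ≤ pos (x0.1 + 1, ()) := hx0 _ (Finset.mem_univ _)
    have h2 : pos (x0.1 + 1, ()) ≠ pos x0 := fun h => hne (hpos h)
    omega
  refine ⟨pos x0 + 1, {s(x0, (x0.1 + 1, ()))}, ⟨?_, ?_⟩, by simp⟩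
  · intro e he
    rw [Finset.coe_singleton, Set.mem_singleton_iff] at he
    subst he
    refine (SimpleGraph.mem_edgeSet _).mpr (crossG_adj.mpr ⟨?_, Or.inl ⟨by omega, hpos1⟩⟩)
    exact (tg_adj _ _).mpr (Or.inr ⟨fun h => hfin h.symm, rfl, rfl⟩)
  · intro e he f hf hef u hu v hv
    rw [Finset.mem_singleton] at he hf
    exact absurd (he.trans hf.symm) hef

end Main
section Step

variable {B : Type*}

lemma goodFam_step [Fintype B] {β : SimpleGraph B} {r : B} (hconn : β.Connected)
    {m : ℕ} (hm : 1 ≤ m) (hP : GoodFam β r m) :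
    GoodFam (starQ β r) (Sum.inl ()) (m + 1) := by
  intro pos hpos
  have hBne : Nonempty B := hconn.nonempty
  set G := tg (starQ β r) (Sum.inl ()) with hG
  set emb : Fin 3 → Fin 3 × B → Fin 3 × (Unit ⊕ Fin 3 × B) :=
    fun i p => (i, Sum.inr p) with hemb
  have hembinj : ∀ i, Function.Injective (emb i) := by
    intro i p q h
    simpa [hemb, Prod.ext_iff] using h
  choose t M hMind hMcard using fun i : Fin 3 => hP (pos ∘ emb i) (hpos.comp (hembinj i))
  -- straddle witnesses inside each copy
  have hwit : ∀ i : Fin 3, (∃ p : Fin 3 × B, pos (emb i p) < t i) ∧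
      (∃ q : Fin 3 × B, t i ≤ pos (emb i q)) := by
    intro i
    obtain ⟨e, he⟩ := Finset.card_pos.mp (lt_of_lt_of_le hm (hMcard i))
    revert he
    induction e using Sym2.ind with
    | _ p q =>
      intro he
      have hedge : (crossG (tg β r) (pos ∘ emb i) (t i)).Adj p q :=
        (SimpleGraph.mem_edgeSet _).mp ((hMind i).1 (Finset.mem_coe.mpr he))
      rcases hedge.2 with ⟨h1, h2⟩ | ⟨h1, h2⟩
      · exact ⟨⟨p, h1⟩, ⟨q, h2⟩⟩
      · exact ⟨⟨q, h1⟩, ⟨p, h2⟩⟩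
  by_cases hsplit : ∃ i : Fin 3,
      (∃ x : Fin 3 × (Unit ⊕ Fin 3 × B), x.1 ≠ i ∧ pos x < t i) ∧
      (∃ y : Fin 3 × (Unit ⊕ Fin 3 × B), y.1 ≠ i ∧ t i ≤ pos y)
  · -- a cut splitting one copy and the rest: matching from the copy plus an extra edge
    obtain ⟨i, ⟨x, hx1, hx2⟩, ⟨y, hy1, hy2⟩⟩ := hsplit
    set D : Set (Fin 3 × (Unit ⊕ Fin 3 × B)) := {z | z.1 ≠ i} with hD
    have hxD : x ∈ D := hx1
    have hyD : y ∈ D := hy1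
    have hadjD : ∀ (u v : D), G.Adj u.1 v.1 → (G.induce D).Adj u v := fun u v h => h
    have hadj_copy : ∀ (c : Fin 3) (j : Fin 3) {a b : B}, β.Adj a b →
        G.Adj (c, Sum.inr (j, a)) (c, Sum.inr (j, b)) := by
      intro c j a b hab
      refine (tg_adj _ _).mpr (Or.inl ⟨rfl, ?_, ?_⟩)
      · simp [hab.ne]
      · exact adj_edist_le_two ((starQ_adj_inr_inr j j a b).mpr ⟨rfl, hab⟩)
    have hadj_root : ∀ (c : Fin 3) (j : Fin 3),
        G.Adj (c, Sum.inr (j, r)) (c, Sum.inl ()) := by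
      intro c j
      refine (tg_adj _ _).mpr (Or.inl ⟨rfl, by simp, ?_⟩)
      exact adj_edist_le_two ((starQ_adj_inl_inr j r).mpr rfl).symm
    have hadj_tops : ∀ (c c' : Fin 3), c ≠ c' →
        G.Adj (c, Sum.inl ()) (c', Sum.inl ()) :=
      fun c c' h => (tg_adj _ _).mpr (Or.inr ⟨h, rfl, rfl⟩)
    have hlift : ∀ (c : Fin 3) (hc : c ≠ i) (j : Fin 3) (a b : B) (w : β.Walk a b),
        (G.induce D).Reachable ⟨(c, Sum.inr (j, a)), hc⟩ ⟨(c, Sum.inr (j, b)), hc⟩ := by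
      intro c hc j a b w
      induction w with
      | nil => exact SimpleGraph.Reachable.refl _
      | cons hadj p ih =>
        exact (SimpleGraph.Adj.reachable (hadjD _ _ (hadj_copy c j hadj))).trans ih
    have hroot' : ∀ (c : Fin 3) (hc : c ≠ i) (z : Unit ⊕ Fin 3 × B),
        (G.induce D).Reachable ⟨(c, z), hc⟩ ⟨(c, Sum.inl ()), hc⟩ := by
      rintro c hc (u | ⟨j, a⟩)
      · cases u
        exact SimpleGraph.Reachable.refl _
      · exact (hlift c hc j a r (hconn.preconnected a r).some).trans
          (SimpleGraph.Adj.reachable (hadjD _ _ (hadj_root c j)))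
    have hreach : (G.induce D).Reachable ⟨x, hxD⟩ ⟨y, hyD⟩ := by
      have h1 := hroot' x.1 hx1 x.2
      have h2 := hroot' y.1 hy1 y.2
      have hmid : (G.induce D).Reachable ⟨(x.1, Sum.inl ()), hx1⟩ ⟨(y.1, Sum.inl ()), hy1⟩ := by
        rcases eq_or_ne x.1 y.1 with h | h
        · have heq : (⟨(x.1, Sum.inl ()), hx1⟩ : D) = ⟨(y.1, Sum.inl ()), hy1⟩ :=
            Subtype.ext (show (x.1, (Sum.inl () : Unit ⊕ Fin 3 × B)) = (y.1, Sum.inl ()) by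
              rw [h])
          rw [heq]
        · exact SimpleGraph.Adj.reachable (hadjD _ _ (hadj_tops _ _ h))
      exact (h1.trans hmid).trans h2.symm
    obtain ⟨wk⟩ := hreach
    obtain ⟨uD, vD, huv, hu, hv⟩ :=
      exists_cross_edge (G.induce D) (fun z => pos z.1) (t i) wk hx2 hy2
    have huvG : G.Adj uD.1 vD.1 := huv
    have hucross : uD.1.1 ≠ i := uD.2
    have hvcross : vD.1.1 ≠ i := vD.2
    have hiff : ∀ p q : Fin 3 × B,
        (crossG (tg β r) (pos ∘ emb i) (t i)).Adj p q ↔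
        (crossG G pos (t i)).Adj (emb i p) (emb i q) := by
      intro p q
      rw [crossG_adj, crossG_adj]
      constructor
      · rintro ⟨h1, h2⟩
        exact ⟨(tg_starQ_adj_emb i p q).mpr h1, h2⟩
      · rintro ⟨h1, h2⟩
        exact ⟨(tg_starQ_adj_emb i p q).mp h1, h2⟩
    obtain ⟨M', hM'ind, hM'card, hMend⟩ := isInducedMatching_map (hembinj i) hiff (hMind i)
    have hsep : ∀ z : Fin 3 × (Unit ⊕ Fin 3 × B), z.1 ≠ i → ∀ p : Fin 3 × B,
        z ≠ emb i p ∧ ¬ (crossG G pos (t i)).Adj z (emb i p) := by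
      intro z hz p
      constructor
      · intro h
        exact hz (congrArg Prod.fst h)
      · intro hA
        exact tg_starQ_not_adj_cross i z.1 hz z.2 p hA.1
    refine ⟨t i, insert s(uD.1, vD.1) M', ⟨?_, ?_⟩, ?_⟩
    · intro e he
      rw [Finset.coe_insert, Set.mem_insert_iff] at he
      rcases he with rfl | heM
      · exact (SimpleGraph.mem_edgeSet _).mpr (crossG_adj.mpr ⟨huvG, Or.inl ⟨hu, hv⟩⟩)
      · exact hM'ind.1 heM
    · intro e he f hf hef z hz w hw
      rcases Finset.mem_insert.mp he with rfl | heM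
      · rcases Finset.mem_insert.mp hf with rfl | hfM
        · exact absurd rfl hef
        · obtain ⟨p, rfl⟩ := hMend f hfM w hw
          have hz1 : z.1 ≠ i := by
            rcases Sym2.mem_iff.mp hz with rfl | rfl
            exacts [hucross, hvcross]
          exact hsep z hz1 p
      · rcases Finset.mem_insert.mp hf with rfl | hfM
        · obtain ⟨p, rfl⟩ := hMend e heM z hz
          have hw1 : w.1 ≠ i := by
            rcases Sym2.mem_iff.mp hw with rfl | rfl
            exacts [hucross, hvcross]
          obtain ⟨hne', hnadj⟩ := hsep w hw1 p
          exact ⟨fun h => hne' h.symm, fun h => hnadj h.symm⟩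
        · exact hM'ind.2 e heM f hfM hef z hz w hw
    · have hnotmem : s(uD.1, vD.1) ∉ M' := by
        intro hmem
        obtain ⟨p, hp⟩ := hMend _ hmem uD.1 (Sym2.mem_mk_left _ _)
        exact hucross (congrArg Prod.fst hp)
      rw [Finset.card_insert_of_notMem hnotmem, hM'card]
      have := hMcard i
      omega
  · -- otherwise derive a contradiction
    exfalso
    push_neg at hsplit
    have hcases : ∀ i : Fin 3, (∀ x : Fin 3 × (Unit ⊕ Fin 3 × B), x.1 ≠ i → t i ≤ pos x) ∨
        (∀ y : Fin 3 × (Unit ⊕ Fin 3 × B), y.1 ≠ i → pos y < t i) := by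
      intro i
      by_cases hA : ∃ x : Fin 3 × (Unit ⊕ Fin 3 × B), x.1 ≠ i ∧ pos x < t i
      · exact Or.inr (hsplit i hA)
      · push_neg at hA
        exact Or.inl hA
    have hmin : ∀ i : Fin 3, ∃ p : Fin 3 × B, ∀ q : Fin 3 × B,
        pos (emb i p) ≤ pos (emb i q) := by
      intro i
      obtain ⟨p, -, hp⟩ := Finset.exists_min_image Finset.univ (fun q => pos (emb i q))
        ⟨(0, Classical.arbitrary B), Finset.mem_univ _⟩
      exact ⟨p, fun q => hp q (Finset.mem_univ q)⟩
    have hmax : ∀ i : Fin 3, ∃ p : Fin 3 × B, ∀ q : Fin 3 × B,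
        pos (emb i q) ≤ pos (emb i p) := by
      intro i
      obtain ⟨p, -, hp⟩ := Finset.exists_max_image Finset.univ (fun q => pos (emb i q))
        ⟨(0, Classical.arbitrary B), Finset.mem_univ _⟩
      exact ⟨p, fun q => hp q (Finset.mem_univ q)⟩
    choose pl hpl using hmin
    choose pu hpu using hmax
    have hlt : ∀ i, pos (emb i (pl i)) < t i := by
      intro i
      obtain ⟨p, hp⟩ := (hwit i).1
      exact lt_of_le_of_lt (hpl i p) hp
    have hut : ∀ i, t i ≤ pos (emb i (pu i)) := by
      intro i
      obtain ⟨q, hq⟩ := (hwit i).2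
      exact le_trans hq (hpu i q)
    obtain ⟨i₁, -, hi₁⟩ := Finset.exists_min_image Finset.univ
      (fun i => pos (emb i (pu i))) ⟨0, Finset.mem_univ _⟩
    have hfin3 : ∀ a : Fin 3, a + 1 ≠ a ∧ a + 2 ≠ a ∧ a + 1 ≠ a + 2 := by decide
    obtain ⟨h21, h31, h23⟩ := hfin3 i₁
    rcases hcases i₁ with hR | hL
    · have hRl : ∀ i', i' ≠ i₁ → t i₁ ≤ pos (emb i' (pl i')) :=
        fun i' hi' => hR (emb i' (pl i')) hi'
      have hLall : ∀ i', i' ≠ i₁ → ∀ y : Fin 3 × (Unit ⊕ Fin 3 × B),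
          y.1 ≠ i' → pos y < t i' := by
        intro i' hi'
        rcases hcases i' with hR' | hL'
        · exfalso
          have h1 : t i' ≤ pos (emb i₁ (pl i₁)) := hR' (emb i₁ (pl i₁)) (Ne.symm hi')
          have h2 := hlt i₁
          have h3 := hRl i' hi'
          have h4 := hlt i'
          omega
        · exact hL'
      have hA : pos (emb (i₁ + 2) (pu (i₁ + 2))) < t (i₁ + 1) :=
        hLall (i₁ + 1) h21 (emb (i₁ + 2) (pu (i₁ + 2))) (fun h => h23 h.symm)
      have hB : pos (emb (i₁ + 1) (pu (i₁ + 1))) < t (i₁ + 2) :=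
        hLall (i₁ + 2) h31 (emb (i₁ + 1) (pu (i₁ + 1))) h23
      have hC := hut (i₁ + 1)
      have hDq := hut (i₁ + 2)
      omega
    · have h1 : pos (emb (i₁ + 1) (pu (i₁ + 1))) < t i₁ :=
        hL (emb (i₁ + 1) (pu (i₁ + 1))) h21
      have h2 := hut i₁
      have h3 := hi₁ (i₁ + 1) (Finset.mem_univ _)
      omega

end Step
section Assemble

lemma Hgraph_succ_eq (k : ℕ) :
    Hgraph (k + 1) = starQ (starQ (Hgraph k) (Hroot k)) (Sum.inl ()) := by
  have h12 : ∀ x y : Unit ⊕ (Fin 3 × (Unit ⊕ (Fin 3 × HV k))),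
      ((∃ i : Fin 3, x = Sum.inl () ∧ y = Sum.inr (i, Sum.inl ())) ∨
       (∃ (i j : Fin 3), x = Sum.inr (i, Sum.inl ()) ∧
          y = Sum.inr (i, Sum.inr (j, Hroot k))) ∨
       (∃ (i j : Fin 3) (a b : HV k), x = Sum.inr (i, Sum.inr (j, a)) ∧
         y = Sum.inr (i, Sum.inr (j, b)) ∧ (Hgraph k).Adj a b)) →
      ((∃ i : Fin 3, x = Sum.inl () ∧ y = Sum.inr (i, Sum.inl ())) ∨
       (∃ (i : Fin 3) (a b : Unit ⊕ (Fin 3 × HV k)), x = Sum.inr (i, a) ∧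
         y = Sum.inr (i, b) ∧ (starQ (Hgraph k) (Hroot k)).Adj a b)) := by
    rintro x y (⟨i, rfl, rfl⟩ | ⟨i, j, rfl, rfl⟩ | ⟨i, j, a, b, rfl, rfl, hab⟩)
    · exact Or.inl ⟨i, rfl, rfl⟩
    · exact Or.inr ⟨i, _, _, rfl, rfl, (starQ_adj_inl_inr j (Hroot k)).mpr rfl⟩
    · exact Or.inr ⟨i, _, _, rfl, rfl, (starQ_adj_inr_inr j j a b).mpr ⟨rfl, hab⟩⟩
  have h21 : ∀ x y : Unit ⊕ (Fin 3 × (Unit ⊕ (Fin 3 × HV k))),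
      ((∃ i : Fin 3, x = Sum.inl () ∧ y = Sum.inr (i, Sum.inl ())) ∨
       (∃ (i : Fin 3) (a b : Unit ⊕ (Fin 3 × HV k)), x = Sum.inr (i, a) ∧
         y = Sum.inr (i, b) ∧ (starQ (Hgraph k) (Hroot k)).Adj a b)) →
      (((∃ i : Fin 3, x = Sum.inl () ∧ y = Sum.inr (i, Sum.inl ())) ∨
       (∃ (i j : Fin 3), x = Sum.inr (i, Sum.inl ()) ∧
          y = Sum.inr (i, Sum.inr (j, Hroot k))) ∨
       (∃ (i j : Fin 3) (a b : HV k), x = Sum.inr (i, Sum.inr (j, a)) ∧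
         y = Sum.inr (i, Sum.inr (j, b)) ∧ (Hgraph k).Adj a b)) ∨
      ((∃ i : Fin 3, y = Sum.inl () ∧ x = Sum.inr (i, Sum.inl ())) ∨
       (∃ (i j : Fin 3), y = Sum.inr (i, Sum.inl ()) ∧
          x = Sum.inr (i, Sum.inr (j, Hroot k))) ∨
       (∃ (i j : Fin 3) (a b : HV k), y = Sum.inr (i, Sum.inr (j, a)) ∧
         x = Sum.inr (i, Sum.inr (j, b)) ∧ (Hgraph k).Adj a b))) := by
    rintro x y (⟨i, rfl, rfl⟩ | ⟨i, a, b, rfl, rfl, hab⟩)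
    · exact Or.inl (Or.inl ⟨i, rfl, rfl⟩)
    · rcases a with u | ⟨j, c⟩ <;> rcases b with u' | ⟨j', d⟩
      · cases u; cases u'
        exact absurd rfl hab.ne
      · cases u
        have hd := (starQ_adj_inl_inr j' d).mp hab
        exact Or.inl (Or.inr (Or.inl ⟨i, j', rfl, by rw [hd]⟩))
      · cases u'
        have hc := (starQ_adj_inl_inr j c).mp hab.symm
        exact Or.inr (Or.inr (Or.inl ⟨i, j, rfl, by rw [hc]⟩))
      · obtain ⟨hj, hcd⟩ := (starQ_adj_inr_inr j j' c d).mp hab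
        subst hj
        exact Or.inl (Or.inr (Or.inr ⟨i, j, c, d, rfl, rfl, hcd⟩))
  ext x y
  constructor
  · rintro ⟨hne, h | h⟩
    · exact ⟨hne, Or.inl (h12 x y h)⟩
    · exact ⟨hne, Or.inr (h12 y x h)⟩
  · rintro ⟨hne, h | h⟩
    · exact ⟨hne, h21 x y h⟩
    · exact ⟨hne, Or.symm (h21 y x h)⟩

lemma Hgraph_connected : ∀ k : ℕ, (Hgraph k).Connected := by
  intro k
  induction k with
  | zero =>
    rw [SimpleGraph.connected_iff]
    refine ⟨?_, ⟨Hroot 0⟩⟩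
    intro a b
    have ha : a = Hroot 0 := rfl
    have hb : b = Hroot 0 := rfl
    rw [ha, hb]
  | succ k ih =>
    rw [Hgraph_succ_eq]
    exact starQ_connected (starQ_connected ih)

lemma goodFam_Hgraph : ∀ k : ℕ, GoodFam (Hgraph k) (Hroot k) (2 * k + 1) := by
  intro k
  induction k with
  | zero => exact goodFam_base
  | succ k ih =>
    have h1 := goodFam_step (Hgraph_connected k) (by omega) ih
    have h2 := goodFam_step (starQ_connected (Hgraph_connected k)) (by omega) h1
    have hrw : 2 * (k + 1) + 1 = 2 * k + 1 + 1 + 1 := by ring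
    rw [hrw]
    show GoodFam (Hgraph (k + 1)) (Hroot (k + 1)) _
    rw [Hgraph_succ_eq k]
    exact h2

lemma graphPow_two_adj {W : Type*} [Fintype W] (G : SimpleGraph W) (u v : W) :
    (graphPow G 2).Adj u v ↔ u ≠ v ∧ G.edist u v ≤ 2 := by
  constructor
  · rintro ⟨h1, h2⟩
    exact ⟨h1, by exact_mod_cast h2⟩
  · rintro ⟨h1, h2⟩
    exact ⟨h1, by exact_mod_cast h2⟩

end Assemble

/-- For every `k ≥ 0`, deleting the root `v` from the square of the tree `T_v` (whose root
`v` has three children, each the root of a copy of `H k`) leaves a graph of linear MIM-width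
at least `2k + 1`. -/
theorem lmw_TvGraph_square_del_root (k : ℕ) :
    2 * k + 1 ≤ lmw ((graphPow (TvGraph k) 2).induce {x | x ≠ Sum.inl ()}) := by
  apply le_lmw
  intro σ
  set Gt := (graphPow (TvGraph k) 2).induce {x | x ≠ Sum.inl ()} with hGt
  have hmem : ∀ p : Fin 3 × HV k, (Sum.inr p : Unit ⊕ Fin 3 × HV k) ∈
      {x : Unit ⊕ Fin 3 × HV k | x ≠ Sum.inl ()} := by
    intro p h
    simp at h
  set e : Fin 3 × HV k → ({x : Unit ⊕ Fin 3 × HV k | x ≠ Sum.inl ()} : Set _) :=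
    fun p => ⟨Sum.inr p, hmem p⟩ with he
  have heinj : Function.Injective e := by
    intro p q h
    have h2 := congrArg Subtype.val h
    simpa [he] using h2
  have hposinj : Function.Injective (fun p => ((σ (e p) : Fin _) : ℕ)) := by
    intro p q h
    exact heinj (σ.injective (Fin.ext h))
  obtain ⟨t, M, hMind, hMcard⟩ := goodFam_Hgraph k (fun p => ((σ (e p) : Fin _) : ℕ)) hposinj
  have hadj : ∀ p q : Fin 3 × HV k,
      (crossG (tg (Hgraph k) (Hroot k)) (fun p => ((σ (e p) : Fin _) : ℕ)) t).Adj p q ↔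
      (crossG Gt (fun v => ((σ v : Fin _) : ℕ)) t).Adj (e p) (e q) := by
    intro p q
    rw [crossG_adj, crossG_adj]
    have hmain : (tg (Hgraph k) (Hroot k)).Adj p q ↔ Gt.Adj (e p) (e q) := by
      rw [tg_adj_iff_pow]
      have hpow : Gt.Adj (e p) (e q) ↔
          ((Sum.inr p : Unit ⊕ Fin 3 × HV k) ≠ Sum.inr q ∧
            (TvGraph k).edist (Sum.inr p) (Sum.inr q) ≤ 2) :=
        graphPow_two_adj (TvGraph k) (Sum.inr p) (Sum.inr q)
      rw [hpow, TvGraph_eq k]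
    constructor
    · rintro ⟨h1, h2⟩
      exact ⟨hmain.mp h1, h2⟩
    · rintro ⟨h1, h2⟩
      exact ⟨hmain.mpr h1, h2⟩
  obtain ⟨M', hM'ind, hM'card, -⟩ := isInducedMatching_map heinj hadj hMind
  rw [← cutGraph_eq_crossG Gt σ t] at hM'ind
  have hbounds : 1 ≤ t ∧ t < Fintype.card
      ({x : Unit ⊕ Fin 3 × HV k | x ≠ Sum.inl ()} : Set _) := by
    obtain ⟨e0, he0⟩ := Finset.card_pos.mp (lt_of_lt_of_le (by omega) hMcard)
    revert he0
    induction e0 using Sym2.ind with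
    | _ p q =>
      intro he0
      have hedge := (SimpleGraph.mem_edgeSet _).mp (hMind.1 (Finset.mem_coe.mpr he0))
      rcases hedge.2 with ⟨h1, h2⟩ | ⟨h1, h2⟩
      · have h1' : ((σ (e p) : Fin _) : ℕ) < t := h1
        have h2' : t ≤ ((σ (e q) : Fin _) : ℕ) := h2
        have hq : ((σ (e q) : Fin _) : ℕ) < Fintype.card
            ({x : Unit ⊕ Fin 3 × HV k | x ≠ Sum.inl ()} : Set _) := (σ (e q)).isLt
        constructor <;> omega
      · have h1' : ((σ (e q) : Fin _) : ℕ) < t := h1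
        have h2' : t ≤ ((σ (e p) : Fin _) : ℕ) := h2
        have hp : ((σ (e p) : Fin _) : ℕ) < Fintype.card
            ({x : Unit ⊕ Fin 3 × HV k | x ≠ Sum.inl ()} : Set _) := (σ (e p)).isLt
        constructor <;> omega
  calc 2 * k + 1 ≤ M.card := hMcard
    _ = M'.card := hM'card.symm
    _ ≤ mim (cutGraph Gt σ t) := le_mim hM'ind
    _ ≤ mw Gt σ := Finset.le_sup (f := fun i => mim (cutGraph Gt σ i))
      (Finset.mem_Ico.mpr hbounds)


end LMW
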